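/- Let f, f̃, g, g̃ be nonnegative integrable functions on ℝ² with ‖f‖₁, ‖f̃‖₁, ‖g‖₁, ‖g̃‖₁ ≤ K, and let ρ, ρ̃ : ℝ⁴ → [0,∞) be measurable with x₁⁺ρ ≤ M, x₁⁺ρ̃ ≤ M and x₁⁺|ρ - ρ̃| ≤ δ pointwise. Define B[f,g,ρ](x,y) = ∬∬ Γ_{σx²}(x-(x₁+x₂)/2)Γ_{σy²}(y-(y₁+y₂)/2) x₁⁺ρ(x₁,y₁,x₂,y₂) f(x₁,y₁)g(x₂,y₂) dx₁dy₁dx₂dy₂. Then ∬ |B[f,g,ρ] - B[f̃,g̃,ρ̃]| dx dy ≤ K² δ + M K (‖f-f̃‖₁ + ‖g-g̃‖₁). -/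

import Mathlib

open MeasureTheory Real

/-- One-dimensional centered Gaussian density with variance `v`. -/
noncomputable def gauss (v z : ℝ) : ℝ :=
  (Real.sqrt (2 * Real.pi * v))⁻¹ * Real.exp (-z ^ 2 / (2 * v))

lemma gauss_nonneg (v z : ℝ) : 0 ≤ gauss v z := by
  unfold gauss; positivity

lemma gauss_le {v : ℝ} (hv : 0 < v) (z : ℝ) :
    gauss v z ≤ (Real.sqrt (2 * Real.pi * v))⁻¹ := by
  unfold gauss
  have h1 : Real.exp (-z ^ 2 / (2 * v)) ≤ 1 := by
    rw [Real.exp_le_one_iff]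
    exact div_nonpos_of_nonpos_of_nonneg (by nlinarith [sq_nonneg z]) (by positivity)
  calc (Real.sqrt (2 * Real.pi * v))⁻¹ * Real.exp (-z ^ 2 / (2 * v))
      ≤ (Real.sqrt (2 * Real.pi * v))⁻¹ * 1 := by
        apply mul_le_mul_of_nonneg_left h1; positivity
    _ = _ := mul_one _

lemma gauss_continuous (v : ℝ) : Continuous (gauss v) := by
  unfold gauss; fun_prop

lemma gauss_shift_eq {v : ℝ} (hv : 0 < v) (c : ℝ) :
    (fun x => gauss v (x - c)) = ProbabilityTheory.gaussianPDFReal c ⟨v, hv.le⟩ := by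
  funext x
  simp [gauss, ProbabilityTheory.gaussianPDFReal]
  rfl

lemma gauss_shift_integrable {v : ℝ} (hv : 0 < v) (c : ℝ) :
    Integrable (fun x => gauss v (x - c)) := by
  rw [gauss_shift_eq hv c]
  exact ProbabilityTheory.integrable_gaussianPDFReal c _

lemma gauss_shift_integral {v : ℝ} (hv : 0 < v) (c : ℝ) :
    ∫ x, gauss v (x - c) = 1 := by
  rw [gauss_shift_eq hv c]
  exact ProbabilityTheory.integral_gaussianPDFReal_eq_one c
    (by intro h; exact hv.ne' (congrArg NNReal.toReal h))

lemma gauss2_integrable {vx vy : ℝ} (hvx : 0 < vx) (hvy : 0 < vy) (a b c : ℝ) :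
    Integrable (fun w : ℝ × ℝ => gauss vx (w.1 - a) * gauss vy (w.2 - b) * c) := by
  exact ((gauss_shift_integrable hvx a).mul_prod (gauss_shift_integrable hvy b)).mul_const c

lemma gauss2_integral {vx vy : ℝ} (hvx : 0 < vx) (hvy : 0 < vy) (a b c : ℝ) :
    ∫ w : ℝ × ℝ, gauss vx (w.1 - a) * gauss vy (w.2 - b) * c = c := by
  rw [Measure.volume_eq_prod, integral_mul_const,
    integral_prod_mul (fun t => gauss vx (t - a)) (fun t => gauss vy (t - b)),
    gauss_shift_integral hvx a, gauss_shift_integral hvy b]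
  ring

set_option maxHeartbeats 2000000 in
lemma key_fubini {vx vy : ℝ} (hvx : 0 < vx) (hvy : 0 < vy)
    (h : (ℝ × ℝ) × (ℝ × ℝ) → ℝ) (hh : Integrable h) (hh0 : ∀ z, 0 ≤ h z) :
    Integrable (fun w : ℝ × ℝ => ∫ z : (ℝ × ℝ) × (ℝ × ℝ),
        gauss vx (w.1 - (z.1.1 + z.2.1) / 2) * gauss vy (w.2 - (z.1.2 + z.2.2) / 2) * h z) ∧
    (∫ x : ℝ, ∫ y : ℝ, ∫ z : (ℝ × ℝ) × (ℝ × ℝ),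
        gauss vx (x - (z.1.1 + z.2.1) / 2) * gauss vy (y - (z.1.2 + z.2.2) / 2) * h z)
      = ∫ z, h z := by
  set Ψ : (ℝ × ℝ) × ((ℝ × ℝ) × (ℝ × ℝ)) → ℝ := fun w =>
    gauss vx (w.1.1 - (w.2.1.1 + w.2.2.1) / 2) * gauss vy (w.1.2 - (w.2.1.2 + w.2.2.2) / 2)
      * h w.2 with hΨdef
  have hGcont : Continuous (fun w : (ℝ × ℝ) × ((ℝ × ℝ) × (ℝ × ℝ)) =>
      gauss vx (w.1.1 - (w.2.1.1 + w.2.2.1) / 2)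
        * gauss vy (w.1.2 - (w.2.1.2 + w.2.2.2) / 2)) :=
    ((gauss_continuous vx).comp (by fun_prop)).mul ((gauss_continuous vy).comp (by fun_prop))
  have hΨm : AEStronglyMeasurable Ψ
      ((volume : Measure (ℝ × ℝ)).prod (volume : Measure ((ℝ × ℝ) × (ℝ × ℝ)))) :=
    hGcont.aestronglyMeasurable.mul
      (hh.aestronglyMeasurable.comp_quasiMeasurePreserving Measure.quasiMeasurePreserving_snd)
  have hnorm : ∀ z : (ℝ × ℝ) × (ℝ × ℝ), ∀ w : ℝ × ℝ, ‖Ψ (w, z)‖ =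
      gauss vx (w.1 - (z.1.1 + z.2.1) / 2) * gauss vy (w.2 - (z.1.2 + z.2.2) / 2) * h z := by
    intro z w
    rw [Real.norm_eq_abs, abs_of_nonneg]
    exact mul_nonneg (mul_nonneg (gauss_nonneg _ _) (gauss_nonneg _ _)) (hh0 z)
  have hΨi : Integrable Ψ ((volume : Measure (ℝ × ℝ)).prod volume) := by
    refine (integrable_prod_iff' hΨm).mpr ⟨?_, ?_⟩
    · refine Filter.Eventually.of_forall fun z => ?_
      exact gauss2_integrable hvx hvy ((z.1.1 + z.2.1) / 2) ((z.1.2 + z.2.2) / 2) (h z)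
    · have heq : (fun z : (ℝ × ℝ) × (ℝ × ℝ) => ∫ w : ℝ × ℝ, ‖Ψ (w, z)‖) = fun z => h z := by
        funext z
        simp_rw [hnorm z]
        exact gauss2_integral hvx hvy _ _ _
      rw [heq]; exact hh
  have hT : Integrable (fun w : ℝ × ℝ => ∫ z, Ψ (w, z)) volume := hΨi.integral_prod_left
  have hint : ∀ z : (ℝ × ℝ) × (ℝ × ℝ), (∫ w : ℝ × ℝ, Ψ (w, z)) = h z := by
    intro z
    simp only [hΨdef]
    exact gauss2_integral hvx hvy ((z.1.1 + z.2.1) / 2) ((z.1.2 + z.2.2) / 2) (h z)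
  refine ⟨hT, ?_⟩
  calc (∫ x : ℝ, ∫ y : ℝ, ∫ z : (ℝ × ℝ) × (ℝ × ℝ), Ψ ((x, y), z))
      = ∫ w : ℝ × ℝ, ∫ z, Ψ (w, z) := (integral_prod _ hT).symm
    _ = ∫ u, Ψ u ∂((volume : Measure (ℝ × ℝ)).prod volume) := (integral_prod _ hΨi).symm
    _ = ∫ z, ∫ w : ℝ × ℝ, Ψ (w, z) := integral_prod_symm _ hΨi
    _ = ∫ z, h z := by simp_rw [hint]

/-- The reproduction (birth) operator with mating weight `ρ`. -/
noncomputable def B (σx σy : ℝ) (f g : ℝ × ℝ → ℝ) (ρ : ℝ × ℝ → ℝ × ℝ → ℝ)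
    (x y : ℝ) : ℝ :=
  ∫ p : ℝ × ℝ, ∫ q : ℝ × ℝ,
    gauss (σx ^ 2) (x - (p.1 + q.1) / 2) * gauss (σy ^ 2) (y - (p.2 + q.2) / 2)
      * max p.1 0 * ρ p q * f p * g q

set_option maxHeartbeats 1000000 in
lemma B_rep (σx σy M : ℝ) (hσx : 0 < σx) (hσy : 0 < σy) (hM : 0 ≤ M)
    (f g : ℝ × ℝ → ℝ) (ρ : ℝ × ℝ → ℝ × ℝ → ℝ)
    (hf0 : ∀ p, 0 ≤ f p) (hg0 : ∀ p, 0 ≤ g p)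
    (hfi : Integrable f) (hgi : Integrable g)
    (hρm : Measurable (fun q : (ℝ × ℝ) × (ℝ × ℝ) => ρ q.1 q.2))
    (hρ0 : ∀ p q, 0 ≤ ρ p q) (hρM : ∀ p q, max p.1 0 * ρ p q ≤ M)
    (x y : ℝ) :
    Integrable (fun z : (ℝ × ℝ) × (ℝ × ℝ) =>
      gauss (σx ^ 2) (x - (z.1.1 + z.2.1) / 2) * gauss (σy ^ 2) (y - (z.1.2 + z.2.2) / 2)
        * max z.1.1 0 * ρ z.1 z.2 * f z.1 * g z.2) ∧
    B σx σy f g ρ x y = ∫ z : (ℝ × ℝ) × (ℝ × ℝ),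
      gauss (σx ^ 2) (x - (z.1.1 + z.2.1) / 2) * gauss (σy ^ 2) (y - (z.1.2 + z.2.2) / 2)
        * max z.1.1 0 * ρ z.1 z.2 * f z.1 * g z.2 := by
  have hvx : (0:ℝ) < σx ^ 2 := by positivity
  have hvy : (0:ℝ) < σy ^ 2 := by positivity
  have hfm : AEStronglyMeasurable (fun z : (ℝ × ℝ) × (ℝ × ℝ) => f z.1)
      (volume : Measure ((ℝ × ℝ) × (ℝ × ℝ))) :=
    hfi.aestronglyMeasurable.comp_quasiMeasurePreserving Measure.quasiMeasurePreserving_fst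
  have hgm : AEStronglyMeasurable (fun z : (ℝ × ℝ) × (ℝ × ℝ) => g z.2)
      (volume : Measure ((ℝ × ℝ) × (ℝ × ℝ))) :=
    hgi.aestronglyMeasurable.comp_quasiMeasurePreserving Measure.quasiMeasurePreserving_snd
  have hΦm : AEStronglyMeasurable (fun z : (ℝ × ℝ) × (ℝ × ℝ) =>
      gauss (σx ^ 2) (x - (z.1.1 + z.2.1) / 2) * gauss (σy ^ 2) (y - (z.1.2 + z.2.2) / 2)
        * max z.1.1 0 * ρ z.1 z.2 * f z.1 * g z.2)
      (volume : Measure ((ℝ × ℝ) × (ℝ × ℝ))) := by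
    have hc : Continuous (fun z : (ℝ × ℝ) × (ℝ × ℝ) =>
        gauss (σx ^ 2) (x - (z.1.1 + z.2.1) / 2) * gauss (σy ^ 2) (y - (z.1.2 + z.2.2) / 2)
          * max z.1.1 0) := by
      refine (((gauss_continuous _).comp (by fun_prop)).mul
        ((gauss_continuous _).comp (by fun_prop))).mul ?_
      fun_prop
    exact (((hc.aestronglyMeasurable.mul hρm.aestronglyMeasurable).mul hfm).mul hgm)
  have hdomi : Integrable (fun z : (ℝ × ℝ) × (ℝ × ℝ) =>
      (Real.sqrt (2 * Real.pi * σx ^ 2))⁻¹ * ((Real.sqrt (2 * Real.pi * σy ^ 2))⁻¹ * M)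
        * (f z.1 * g z.2)) :=
    (hfi.mul_prod hgi).const_mul _
  have hΦi : Integrable (fun z : (ℝ × ℝ) × (ℝ × ℝ) =>
      gauss (σx ^ 2) (x - (z.1.1 + z.2.1) / 2) * gauss (σy ^ 2) (y - (z.1.2 + z.2.2) / 2)
        * max z.1.1 0 * ρ z.1 z.2 * f z.1 * g z.2) := by
    refine hdomi.mono' hΦm (Filter.Eventually.of_forall fun z => ?_)
    have h0 : (0:ℝ) ≤ max z.1.1 0 := le_max_right _ _
    rw [Real.norm_eq_abs, abs_of_nonneg (by
      exact mul_nonneg (mul_nonneg (mul_nonneg (mul_nonneg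
        (mul_nonneg (gauss_nonneg _ _) (gauss_nonneg _ _)) h0) (hρ0 _ _)) (hf0 _)) (hg0 _))]
    have e : gauss (σx ^ 2) (x - (z.1.1 + z.2.1) / 2) * gauss (σy ^ 2) (y - (z.1.2 + z.2.2) / 2)
        * max z.1.1 0 * ρ z.1 z.2 * f z.1 * g z.2
        = gauss (σx ^ 2) (x - (z.1.1 + z.2.1) / 2) * (gauss (σy ^ 2) (y - (z.1.2 + z.2.2) / 2)
          * (max z.1.1 0 * ρ z.1 z.2)) * (f z.1 * g z.2) := by ring
    rw [e]
    refine mul_le_mul_of_nonneg_right ?_ (mul_nonneg (hf0 _) (hg0 _))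
    refine mul_le_mul (gauss_le hvx _) ?_ ?_ (by positivity)
    · exact mul_le_mul (gauss_le hvy _) (hρM _ _) (mul_nonneg h0 (hρ0 _ _))
        (by positivity)
    · exact mul_nonneg (gauss_nonneg _ _) (mul_nonneg h0 (hρ0 _ _))
  refine ⟨hΦi, ?_⟩
  unfold B
  exact integral_integral hΦi

set_option maxHeartbeats 2000000 in
theorem stmt_19 (σx σy K M δ : ℝ) (hσx : 0 < σx) (hσy : 0 < σy)
    (hK : 0 ≤ K) (hM : 0 ≤ M) (hδ : 0 ≤ δ)
    (f ftil g gtil : ℝ × ℝ → ℝ)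
    (hf0 : ∀ p, 0 ≤ f p) (hftil0 : ∀ p, 0 ≤ ftil p)
    (hg0 : ∀ p, 0 ≤ g p) (hgtil0 : ∀ p, 0 ≤ gtil p)
    (hfi : Integrable f) (hftili : Integrable ftil)
    (hgi : Integrable g) (hgtili : Integrable gtil)
    (hfK : (∫ p : ℝ × ℝ, f p) ≤ K) (hftilK : (∫ p : ℝ × ℝ, ftil p) ≤ K)
    (hgK : (∫ p : ℝ × ℝ, g p) ≤ K) (hgtilK : (∫ p : ℝ × ℝ, gtil p) ≤ K)
    (ρ ρtil : ℝ × ℝ → ℝ × ℝ → ℝ)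
    (hρm : Measurable (fun q : (ℝ × ℝ) × (ℝ × ℝ) => ρ q.1 q.2))
    (hρtilm : Measurable (fun q : (ℝ × ℝ) × (ℝ × ℝ) => ρtil q.1 q.2))
    (hρ0 : ∀ p q, 0 ≤ ρ p q) (hρtil0 : ∀ p q, 0 ≤ ρtil p q)
    (hρM : ∀ p q, max p.1 0 * ρ p q ≤ M)
    (hρtilM : ∀ p q, max p.1 0 * ρtil p q ≤ M)
    (hρδ : ∀ p q, max p.1 0 * |ρ p q - ρtil p q| ≤ δ) :
    (∫ x : ℝ, ∫ y : ℝ, |B σx σy f g ρ x y - B σx σy ftil gtil ρtil x y|)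
      ≤ K ^ 2 * δ + M * K * ((∫ p : ℝ × ℝ, |f p - ftil p|) + ∫ p : ℝ × ℝ, |g p - gtil p|) := by
  have hvx : (0:ℝ) < σx ^ 2 := by positivity
  have hvy : (0:ℝ) < σy ^ 2 := by positivity
  set H : (ℝ × ℝ) × (ℝ × ℝ) → ℝ := fun z =>
    δ * (f z.1 * g z.2) + M * (|f z.1 - ftil z.1| * g z.2)
      + M * (ftil z.1 * |g z.2 - gtil z.2|) with hHdef
  have hH0 : ∀ z, 0 ≤ H z := by
    intro z
    have := hf0 z.1; have := hg0 z.2; have := hftil0 z.1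
    have := abs_nonneg (f z.1 - ftil z.1); have := abs_nonneg (g z.2 - gtil z.2)
    simp only [hHdef]
    positivity
  have h1i : Integrable (fun z : (ℝ × ℝ) × (ℝ × ℝ) => f z.1 * g z.2) := hfi.mul_prod hgi
  have h2i : Integrable (fun z : (ℝ × ℝ) × (ℝ × ℝ) => |f z.1 - ftil z.1| * g z.2) :=
    (hfi.sub hftili).abs.mul_prod hgi
  have h3i : Integrable (fun z : (ℝ × ℝ) × (ℝ × ℝ) => ftil z.1 * |g z.2 - gtil z.2|) :=
    hftili.mul_prod (hgi.sub hgtili).abs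
  have hHi : Integrable H := ((h1i.const_mul δ).add (h2i.const_mul M)).add (h3i.const_mul M)
  obtain ⟨hTint, hTval⟩ := key_fubini hvx hvy H hHi hH0
  -- pointwise bound
  have hGHi : ∀ x y : ℝ, Integrable (fun z : (ℝ × ℝ) × (ℝ × ℝ) =>
      gauss (σx ^ 2) (x - (z.1.1 + z.2.1) / 2) * gauss (σy ^ 2) (y - (z.1.2 + z.2.2) / 2)
        * H z) := by
    intro x y
    have hc : Continuous (fun z : (ℝ × ℝ) × (ℝ × ℝ) =>
        gauss (σx ^ 2) (x - (z.1.1 + z.2.1) / 2)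
          * gauss (σy ^ 2) (y - (z.1.2 + z.2.2) / 2)) :=
      ((gauss_continuous _).comp (by fun_prop)).mul ((gauss_continuous _).comp (by fun_prop))
    refine (hHi.const_mul ((Real.sqrt (2 * Real.pi * σx ^ 2))⁻¹
        * (Real.sqrt (2 * Real.pi * σy ^ 2))⁻¹)).mono'
      (hc.aestronglyMeasurable.mul hHi.aestronglyMeasurable)
      (Filter.Eventually.of_forall fun z => ?_)
    rw [Real.norm_eq_abs, abs_of_nonneg (mul_nonneg
      (mul_nonneg (gauss_nonneg _ _) (gauss_nonneg _ _)) (hH0 z))]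
    exact mul_le_mul_of_nonneg_right
      (mul_le_mul (gauss_le hvx _) (gauss_le hvy _) (gauss_nonneg _ _) (by positivity))
      (hH0 z)
  have hptw : ∀ x y : ℝ, |B σx σy f g ρ x y - B σx σy ftil gtil ρtil x y|
      ≤ ∫ z : (ℝ × ℝ) × (ℝ × ℝ),
        gauss (σx ^ 2) (x - (z.1.1 + z.2.1) / 2) * gauss (σy ^ 2) (y - (z.1.2 + z.2.2) / 2)
          * H z := by
    intro x y
    obtain ⟨hΦi, hBeq⟩ := B_rep σx σy M hσx hσy hM f g ρ hf0 hg0 hfi hgi hρm hρ0 hρM x y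
    obtain ⟨hΦti, hBteq⟩ := B_rep σx σy M hσx hσy hM ftil gtil ρtil hftil0 hgtil0 hftili
      hgtili hρtilm hρtil0 hρtilM x y
    rw [hBeq, hBteq, ← integral_sub hΦi hΦti, ← Real.norm_eq_abs]
    refine le_trans (norm_integral_le_integral_norm _) ?_
    refine integral_mono_of_nonneg (Filter.Eventually.of_forall fun z => norm_nonneg _)
      (hGHi x y) (Filter.Eventually.of_forall fun z => ?_)
    simp only [Real.norm_eq_abs]
    set G1 := gauss (σx ^ 2) (x - (z.1.1 + z.2.1) / 2) with hG1
    set G2 := gauss (σy ^ 2) (y - (z.1.2 + z.2.2) / 2) with hG2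
    have hG10 : 0 ≤ G1 := gauss_nonneg _ _
    have hG20 : 0 ≤ G2 := gauss_nonneg _ _
    have ha0 : (0:ℝ) ≤ max z.1.1 0 := le_max_right _ _
    have e : G1 * G2 * max z.1.1 0 * ρ z.1 z.2 * f z.1 * g z.2
        - G1 * G2 * max z.1.1 0 * ρtil z.1 z.2 * ftil z.1 * gtil z.2
        = (G1 * G2) * (max z.1.1 0 * ρ z.1 z.2 * f z.1 * g z.2
            - max z.1.1 0 * ρtil z.1 z.2 * ftil z.1 * gtil z.2) := by ring
    rw [e, abs_mul, abs_of_nonneg (mul_nonneg hG10 hG20)]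
    refine mul_le_mul_of_nonneg_left ?_ (mul_nonneg hG10 hG20)
    -- |D| ≤ H z
    have hd : max z.1.1 0 * ρ z.1 z.2 * f z.1 * g z.2
        - max z.1.1 0 * ρtil z.1 z.2 * ftil z.1 * gtil z.2
        = (max z.1.1 0 * (ρ z.1 z.2 - ρtil z.1 z.2)) * (f z.1 * g z.2)
          + (max z.1.1 0 * ρtil z.1 z.2) * ((f z.1 - ftil z.1) * g z.2)
          + (max z.1.1 0 * ρtil z.1 z.2) * (ftil z.1 * (g z.2 - gtil z.2)) := by ring
    rw [hd]
    refine le_trans (abs_add_three _ _ _) ?_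
    simp only [hHdef]
    have b1 : |max z.1.1 0 * (ρ z.1 z.2 - ρtil z.1 z.2) * (f z.1 * g z.2)|
        ≤ δ * (f z.1 * g z.2) := by
      rw [abs_mul, abs_mul, abs_of_nonneg ha0, abs_of_nonneg (mul_nonneg (hf0 _) (hg0 _))]
      exact mul_le_mul_of_nonneg_right (hρδ _ _) (mul_nonneg (hf0 _) (hg0 _))
    have b2 : |max z.1.1 0 * ρtil z.1 z.2 * ((f z.1 - ftil z.1) * g z.2)|
        ≤ M * (|f z.1 - ftil z.1| * g z.2) := by
      rw [abs_mul, abs_of_nonneg (mul_nonneg ha0 (hρtil0 _ _)), abs_mul,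
        abs_of_nonneg (hg0 _)]
      exact mul_le_mul_of_nonneg_right (hρtilM _ _)
        (mul_nonneg (abs_nonneg _) (hg0 _))
    have b3 : |max z.1.1 0 * ρtil z.1 z.2 * (ftil z.1 * (g z.2 - gtil z.2))|
        ≤ M * (ftil z.1 * |g z.2 - gtil z.2|) := by
      rw [abs_mul, abs_of_nonneg (mul_nonneg ha0 (hρtil0 _ _)), abs_mul,
        abs_of_nonneg (hftil0 _)]
      exact mul_le_mul_of_nonneg_right (hρtilM _ _)
        (mul_nonneg (hftil0 _) (abs_nonneg _))
    linarith
  -- outer integration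
  have hTpr : Integrable (fun w : ℝ × ℝ => ∫ z : (ℝ × ℝ) × (ℝ × ℝ),
      gauss (σx ^ 2) (w.1 - (z.1.1 + z.2.1) / 2) * gauss (σy ^ 2) (w.2 - (z.1.2 + z.2.2) / 2)
        * H z) ((volume : Measure ℝ).prod volume) := hTint
  have step1 : (∫ x : ℝ, ∫ y : ℝ, |B σx σy f g ρ x y - B σx σy ftil gtil ρtil x y|)
      ≤ ∫ x : ℝ, ∫ y : ℝ, ∫ z : (ℝ × ℝ) × (ℝ × ℝ),
        gauss (σx ^ 2) (x - (z.1.1 + z.2.1) / 2) * gauss (σy ^ 2) (y - (z.1.2 + z.2.2) / 2)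
          * H z := by
    refine integral_mono_of_nonneg
      (Filter.Eventually.of_forall fun x => integral_nonneg fun y => abs_nonneg _)
      hTpr.integral_prod_left ?_
    filter_upwards [hTpr.prod_right_ae] with x hx
    exact integral_mono_of_nonneg (Filter.Eventually.of_forall fun y => abs_nonneg _) hx
      (Filter.Eventually.of_forall fun y => hptw x y)
  refine le_trans step1 ?_
  rw [hTval]
  -- compute ∫ H
  have hAval : (∫ z : (ℝ × ℝ) × (ℝ × ℝ), f z.1 * g z.2)
      = (∫ p : ℝ × ℝ, f p) * ∫ q : ℝ × ℝ, g q := by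
    rw [Measure.volume_eq_prod]; exact integral_prod_mul f g
  have hBval : (∫ z : (ℝ × ℝ) × (ℝ × ℝ), |f z.1 - ftil z.1| * g z.2)
      = (∫ p : ℝ × ℝ, |f p - ftil p|) * ∫ q : ℝ × ℝ, g q := by
    rw [Measure.volume_eq_prod]
    exact integral_prod_mul (fun p => |f p - ftil p|) g
  have hCval : (∫ z : (ℝ × ℝ) × (ℝ × ℝ), ftil z.1 * |g z.2 - gtil z.2|)
      = (∫ p : ℝ × ℝ, ftil p) * ∫ q : ℝ × ℝ, |g q - gtil q| := by
    rw [Measure.volume_eq_prod]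
    exact integral_prod_mul ftil (fun q => |g q - gtil q|)
  have hHval : (∫ z, H z) = δ * ((∫ p : ℝ × ℝ, f p) * ∫ q : ℝ × ℝ, g q)
      + M * ((∫ p : ℝ × ℝ, |f p - ftil p|) * ∫ q : ℝ × ℝ, g q)
      + M * ((∫ p : ℝ × ℝ, ftil p) * ∫ q : ℝ × ℝ, |g q - gtil q|) := by
    have h1d : Integrable (fun z : (ℝ × ℝ) × (ℝ × ℝ) => δ * (f z.1 * g z.2)) :=
      h1i.const_mul δ
    have h2m : Integrable (fun z : (ℝ × ℝ) × (ℝ × ℝ) =>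
        M * (|f z.1 - ftil z.1| * g z.2)) := h2i.const_mul M
    have h3m : Integrable (fun z : (ℝ × ℝ) × (ℝ × ℝ) =>
        M * (ftil z.1 * |g z.2 - gtil z.2|)) := h3i.const_mul M
    have h12 : Integrable (fun z : (ℝ × ℝ) × (ℝ × ℝ) =>
        δ * (f z.1 * g z.2) + M * (|f z.1 - ftil z.1| * g z.2)) := h1d.add h2m
    simp only [hHdef]
    rw [integral_add h12 h3m, integral_add h1d h2m,
      integral_const_mul, integral_const_mul, integral_const_mul, hAval, hBval, hCval]
  rw [hHval]
  -- final arithmetic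
  have hf0' : 0 ≤ ∫ p : ℝ × ℝ, f p := integral_nonneg hf0
  have hg0' : 0 ≤ ∫ q : ℝ × ℝ, g q := integral_nonneg hg0
  have hftil0' : 0 ≤ ∫ p : ℝ × ℝ, ftil p := integral_nonneg hftil0
  have hA1 : 0 ≤ ∫ p : ℝ × ℝ, |f p - ftil p| := integral_nonneg fun p => abs_nonneg _
  have hA2 : 0 ≤ ∫ q : ℝ × ℝ, |g q - gtil q| := integral_nonneg fun q => abs_nonneg _
  have e1 : δ * ((∫ p : ℝ × ℝ, f p) * ∫ q : ℝ × ℝ, g q) ≤ K ^ 2 * δ := by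
    have : (∫ p : ℝ × ℝ, f p) * ∫ q : ℝ × ℝ, g q ≤ K * K :=
      mul_le_mul hfK hgK hg0' hK
    nlinarith
  have e2 : M * ((∫ p : ℝ × ℝ, |f p - ftil p|) * ∫ q : ℝ × ℝ, g q)
      ≤ M * K * (∫ p : ℝ × ℝ, |f p - ftil p|) := by
    have : (∫ p : ℝ × ℝ, |f p - ftil p|) * ∫ q : ℝ × ℝ, g q
        ≤ (∫ p : ℝ × ℝ, |f p - ftil p|) * K := mul_le_mul_of_nonneg_left hgK hA1
    nlinarith
  have e3 : M * ((∫ p : ℝ × ℝ, ftil p) * ∫ q : ℝ × ℝ, |g q - gtil q|)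
      ≤ M * K * (∫ q : ℝ × ℝ, |g q - gtil q|) := by
    have : (∫ p : ℝ × ℝ, ftil p) * ∫ q : ℝ × ℝ, |g q - gtil q|
        ≤ K * ∫ q : ℝ × ℝ, |g q - gtil q| := mul_le_mul_of_nonneg_right hftilK hA2
    nlinarith
  nlinarith
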